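/- arXiv:cs/0305016 — 3 statements merged into one kernel-verified Lean document; each statement's English description precedes it below -/
import Mathlib

section
/- Let ρ be a real number with 0 < ρ ≤ 1 and let w = (1/2, ρ/2) be the center of Q. Then for every point b ∈ Q one has μ({q ∈ Q : dist(q, b) < dist(q, w)}) < ρ/2. (Wilma wins the one-point game by playing the center of the rectangle.) -/
open MeasureTheory Metric Set
open scoped ENNReal

/-- The point `(x, y)` in the Euclidean plane. -/
noncomputable def pt (x y : ℝ) : EuclideanSpace ℝ (Fin 2) :=
  (WithLp.equiv 2 (Fin 2 → ℝ)).symm ![x, y]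

/-- The rectangular board `[0,1] × [0,ρ]`. -/
def board (ρ : ℝ) : Set (EuclideanSpace ℝ (Fin 2)) :=
  {q | q 0 ∈ Set.Icc (0:ℝ) 1 ∧ q 1 ∈ Set.Icc (0:ℝ) ρ}

lemma board_measurable (ρ : ℝ) : MeasurableSet (board ρ) := by
  apply MeasurableSet.inter
  · exact (measurableSet_Icc).preimage (EuclideanSpace.proj (0 : Fin 2)).continuous.measurable
  · exact (measurableSet_Icc).preimage (EuclideanSpace.proj (1 : Fin 2)).continuous.measurable

lemma board_volume (ρ : ℝ) : volume (board ρ) = ENNReal.ofReal ρ := by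
  have h := (EuclideanSpace.volume_preserving_symm_measurableEquiv_toLp (Fin 2)).measure_preimage
    (s := Set.pi Set.univ ![Set.Icc (0:ℝ) 1, Set.Icc (0:ℝ) ρ])
    (((MeasurableSet.univ_pi (by
      intro i; fin_cases i <;> exact measurableSet_Icc))).nullMeasurableSet)
  have heq : (MeasurableEquiv.toLp 2 (Fin 2 → ℝ)).symm ⁻¹'
      (Set.pi Set.univ ![Set.Icc (0:ℝ) 1, Set.Icc (0:ℝ) ρ]) = board ρ := by
    ext q
    simp [board, Set.mem_pi, Fin.forall_fin_two]
  rw [heq] at h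
  rw [h, volume_pi_pi, Fin.prod_univ_two]
  simp [Real.volume_Icc]

/-- Wilma wins the one-point game by playing the center `w = (1/2, ρ/2)` of the
board: every black point `b ∈ Q` claims strictly less than half the board. -/
theorem stmt_4 (ρ : ℝ) (hρ0 : 0 < ρ) (hρ1 : ρ ≤ 1)
    (w : EuclideanSpace ℝ (Fin 2)) (hw : w = pt (1/2) (ρ/2))
    (b : EuclideanSpace ℝ (Fin 2)) (hb : b ∈ board ρ) :
    volume {q | q ∈ board ρ ∧ dist q b < dist q w} < ENNReal.ofReal (ρ / 2) := by
  have hρ2 : (0:ℝ) < ρ / 2 := by linarith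
  by_cases hbw : b = w
  · have : {q | q ∈ board ρ ∧ dist q b < dist q w} = ∅ := by
      ext q; simp [hbw]
    rw [this, measure_empty]
    exact ENNReal.ofReal_pos.mpr hρ2
  -- setup
  set u : EuclideanSpace ℝ (Fin 2) := b - w with hu
  have hu0 : u ≠ 0 := sub_ne_zero.mpr hbw
  set c : ℝ := ‖u‖ ^ 2 / 2 with hc
  have hcpos : 0 < c := by
    have : 0 < ‖u‖ := norm_pos_iff.mpr hu0
    positivity
  set f : EuclideanSpace ℝ (Fin 2) → ℝ := fun q => inner ℝ (q - w) u with hf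
  have hfcont : Continuous f :=
    (continuous_id.sub continuous_const).inner continuous_const
  -- the target set is contained in A
  set A : Set (EuclideanSpace ℝ (Fin 2)) := board ρ ∩ f ⁻¹' (Set.Ioi c) with hA
  set A' : Set (EuclideanSpace ℝ (Fin 2)) := board ρ ∩ f ⁻¹' (Set.Iio (-c)) with hA'
  have hAm : MeasurableSet A :=
    (board_measurable ρ).inter (measurableSet_Ioi.preimage hfcont.measurable)
  have hA'm : MeasurableSet A' :=
    (board_measurable ρ).inter (measurableSet_Iio.preimage hfcont.measurable)
  have hTsub : {q | q ∈ board ρ ∧ dist q b < dist q w} ⊆ A := by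
    rintro q ⟨hq1, hq2⟩
    refine ⟨hq1, ?_⟩
    rw [dist_eq_norm, dist_eq_norm] at hq2
    have hsq : ‖q - b‖ ^ 2 < ‖q - w‖ ^ 2 := by
      have := pow_lt_pow_left₀ hq2 (norm_nonneg _) two_ne_zero
      exact this
    have hdecomp : q - b = (q - w) - u := by
      rw [hu, sub_sub_sub_cancel_right]
    rw [hdecomp, norm_sub_sq_real] at hsq
    simp only [Set.mem_preimage, Set.mem_Ioi, hf, hc]
    nlinarith [hsq]
  -- symmetry: the reflection through w
  have hrefl : volume A' = volume A := by
    have hmp : volume ((fun q : EuclideanSpace ℝ (Fin 2) => w + w - q) ⁻¹' A) = volume A := by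
      have hco : (fun q : EuclideanSpace ℝ (Fin 2) => w + w - q)
          = (fun q => (w + w) + q) ∘ Neg.neg := by ext q; simp [sub_eq_add_neg]
      rw [hco, Set.preimage_comp, Measure.measure_preimage_neg volume _,
        measure_preimage_add volume _ _]
    have hset : (fun q : EuclideanSpace ℝ (Fin 2) => w + w - q) ⁻¹' A = A' := by
      ext q
      have hw0 : w 0 = 1/2 := by rw [hw]; simp [pt]
      have hw1 : w 1 = ρ/2 := by rw [hw]; simp [pt]
      have hboard : (w + w - q) ∈ board ρ ↔ q ∈ board ρ := by
        simp only [board, Set.mem_setOf_eq, PiLp.sub_apply, PiLp.add_apply, hw0, hw1,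
          Set.mem_Icc]
        constructor <;> rintro ⟨⟨h1, h2⟩, h3, h4⟩ <;> exact ⟨⟨by linarith, by linarith⟩,
          ⟨by linarith, by linarith⟩⟩
      have hfval : f (w + w - q) = -f q := by
        have : (w + w - q) - w = -(q - w) := by abel
        simp only [hf, this, inner_neg_left]
      simp only [hA, hA', Set.mem_preimage, Set.mem_inter_iff, Set.mem_Ioi, Set.mem_Iio,
        hboard, hfval]
      constructor <;> rintro ⟨h1, h2⟩ <;> exact ⟨h1, by linarith⟩
    rw [← hset, hmp]
  -- the middle strip has positive measure
  set S : Set (EuclideanSpace ℝ (Fin 2)) := board ρ \ (A ∪ A') with hS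
  have hSpos : 0 < volume S := by
    set U : Set (EuclideanSpace ℝ (Fin 2)) :=
      ((EuclideanSpace.proj (0 : Fin 2)) ⁻¹' (Set.Ioo (0:ℝ) 1) ∩
       (EuclideanSpace.proj (1 : Fin 2)) ⁻¹' (Set.Ioo (0:ℝ) ρ)) ∩ f ⁻¹' (Set.Ioo (-c) c) with hU
    have hUopen : IsOpen U := by
      apply IsOpen.inter
      · exact (isOpen_Ioo.preimage (EuclideanSpace.proj (0 : Fin 2)).continuous).inter
          (isOpen_Ioo.preimage (EuclideanSpace.proj (1 : Fin 2)).continuous)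
      · exact isOpen_Ioo.preimage hfcont
    have hwU : w ∈ U := by
      have hw0 : w 0 = 1/2 := by rw [hw]; simp [pt]
      have hw1 : w 1 = ρ/2 := by rw [hw]; simp [pt]
      have hfw : f w = 0 := by simp [hf]
      have hproj : ∀ (i : Fin 2) (q : EuclideanSpace ℝ (Fin 2)),
          EuclideanSpace.proj i q = q i := fun _ _ => rfl
      refine ⟨⟨?_, ?_⟩, ?_⟩
      · simp only [Set.mem_preimage, hproj, hw0, Set.mem_Ioo]
        constructor <;> norm_num
      · simp only [Set.mem_preimage, hproj, hw1, Set.mem_Ioo]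
        constructor <;> linarith
      · simp only [Set.mem_preimage, hfw, Set.mem_Ioo]
        exact ⟨by linarith, hcpos⟩
    have hUS : U ⊆ S := by
      have hproj : ∀ (i : Fin 2) (q : EuclideanSpace ℝ (Fin 2)),
          EuclideanSpace.proj i q = q i := fun _ _ => rfl
      rintro q ⟨⟨hq0, hq1⟩, hqf⟩
      simp only [Set.mem_preimage, hproj, Set.mem_Ioo] at hq0 hq1 hqf
      constructor
      · exact ⟨⟨le_of_lt hq0.1, le_of_lt hq0.2⟩, ⟨le_of_lt hq1.1, le_of_lt hq1.2⟩⟩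
      · rintro (⟨_, h⟩ | ⟨_, h⟩)
        · simp only [Set.mem_preimage, Set.mem_Ioi] at h; linarith [hqf.2]
        · simp only [Set.mem_preimage, Set.mem_Iio] at h; linarith [hqf.1]
    calc 0 < volume U := hUopen.measure_pos volume ⟨w, hwU⟩
      _ ≤ volume S := measure_mono hUS
  -- combine
  have hdisj : Disjoint A A' := by
    rw [Set.disjoint_left]
    rintro q ⟨_, hq1⟩ ⟨_, hq2⟩
    simp only [Set.mem_preimage, Set.mem_Ioi] at hq1
    simp only [Set.mem_preimage, Set.mem_Iio] at hq2
    linarith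
  have hsub : A ∪ A' ⊆ board ρ := Set.union_subset Set.inter_subset_left Set.inter_subset_left
  have hkey : volume A + volume A + volume S ≤ ENNReal.ofReal ρ := by
    have h1 : volume A + volume A' = volume (A ∪ A') := (measure_union hdisj hA'm).symm
    have h2 : volume (A ∪ A') + volume S = volume (board ρ) := by
      rw [hS, measure_add_diff (hAm.union hA'm).nullMeasurableSet (board ρ),
        Set.union_eq_right.mpr hsub]
    rw [hrefl] at h1
    rw [h1, h2, board_volume]
  -- finish with real arithmetic
  have hAfin : volume A ≠ ⊤ := by
    intro h
    rw [h] at hkey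
    simp at hkey
  have hSfin : volume S ≠ ⊤ := by
    intro h
    rw [h] at hkey
    simp at hkey
  have hreal : (volume A).toReal + (volume A).toReal + (volume S).toReal ≤ ρ := by
    have := ENNReal.toReal_mono (by simp) hkey
    rw [ENNReal.toReal_add (by exact ENNReal.add_ne_top.mpr ⟨hAfin, hAfin⟩) hSfin,
      ENNReal.toReal_add hAfin hAfin, ENNReal.toReal_ofReal hρ0.le] at this
    exact this
  have hSr : 0 < (volume S).toReal := ENNReal.toReal_pos hSpos.ne' hSfin
  have hAlt : (volume A).toReal < ρ / 2 := by linarith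
  have : volume A < ENNReal.ofReal (ρ / 2) :=
    (ENNReal.lt_ofReal_iff_toReal_lt hAfin).mpr hAlt
  exact lt_of_le_of_lt (measure_mono hTsub) this
end

section
/- Let 0 < ρ ≤ 1 and let W = {(1/4, ρ/4), (3/4, ρ/4), (1/4, 3ρ/4), (3/4, 3ρ/4)} ⊆ Q be the regular 2×2 grid placement of four points. Then for every ε > 0 there exists a set B ⊆ Q with |B| = 4 such that μ({q ∈ Q : infDist(q, B) < infDist(q, W)}) > ρ·(1/2 + 1/128) − ε. (If Wilma plays a 2×2 grid, Barney can gain more than 50.78% of the board.) -/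
open MeasureTheory Metric Set
open scoped ENNReal

lemma pt_zero (x y : ℝ) : pt x y 0 = x := rfl
lemma pt_one (x y : ℝ) : pt x y 1 = y := rfl

lemma pt_inj {a b c d : ℝ} (h : pt a b = pt c d) : a = c ∧ b = d :=
  ⟨congrFun (congrArg (WithLp.equiv 2 (Fin 2 → ℝ)) h) 0,
   congrFun (congrArg (WithLp.equiv 2 (Fin 2 → ℝ)) h) 1⟩

lemma dist_pt_lt {q : EuclideanSpace ℝ (Fin 2)} {x y x' y' : ℝ}
    (h : (q 0 - x)^2 + (q 1 - y)^2 < (q 0 - x')^2 + (q 1 - y')^2) :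
    dist q (pt x y) < dist q (pt x' y') := by
  rw [EuclideanSpace.dist_eq, EuclideanSpace.dist_eq]
  apply Real.sqrt_lt_sqrt (by positivity)
  simpa [Fin.sum_univ_two, Real.dist_eq, sq_abs, pt] using h

lemma infDist_lt_of {B W : Set (EuclideanSpace ℝ (Fin 2))} (hWfin : W.Finite)
    (hWne : W.Nonempty) {q b : EuclideanSpace ℝ (Fin 2)} (hb : b ∈ B)
    (h : ∀ w ∈ W, dist q b < dist q w) : infDist q B < infDist q W := by
  obtain ⟨w, hwW, hw⟩ := hWfin.isCompact.exists_infDist_eq_dist hWne q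
  calc infDist q B ≤ dist q b := infDist_le_dist_of_mem hb
    _ < dist q w := h w hwW
    _ = infDist q W := hw.symm

def ebox (a b c d : ℝ) : Set (EuclideanSpace ℝ (Fin 2)) :=
  {q | q 0 ∈ Ioo a b ∧ q 1 ∈ Ioo c d}

lemma ebox_eq (a b c d : ℝ) :
    ebox a b c d = (MeasurableEquiv.toLp 2 (Fin 2 → ℝ)).symm ⁻¹'
      (Set.univ.pi ![Ioo a b, Ioo c d]) := by
  ext q
  simp [ebox, Set.mem_pi, Fin.forall_fin_two, MeasurableEquiv.coe_toLp_symm]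

lemma ebox_meas (a b c d : ℝ) : MeasurableSet (ebox a b c d) := by
  rw [ebox_eq]
  exact (MeasurableEquiv.toLp 2 (Fin 2 → ℝ)).symm.measurable
    (MeasurableSet.univ_pi (by intro i; fin_cases i <;> exact measurableSet_Ioo))

lemma ebox_vol (a b c d : ℝ) :
    volume (ebox a b c d) = ENNReal.ofReal (b - a) * ENNReal.ofReal (d - c) := by
  rw [ebox_eq,
    (EuclideanSpace.volume_preserving_symm_measurableEquiv_toLp (Fin 2)).measure_preimage
      ((MeasurableSet.univ_pi (by intro i; fin_cases i <;> exact measurableSet_Ioo)).nullMeasurableSet),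
    volume_pi_pi]
  simp [Fin.prod_univ_two, Real.volume_Ioo]

lemma ebox_disj_x {a b c d a' b' c' d' : ℝ} (h : b ≤ a') :
    Disjoint (ebox a b c d) (ebox a' b' c' d') := by
  rw [Set.disjoint_left]
  rintro q ⟨⟨_, h1⟩, _⟩ ⟨⟨h2, _⟩, _⟩
  linarith

lemma ebox_disj_y {a b c d a' b' c' d' : ℝ} (h : d ≤ c') :
    Disjoint (ebox a b c d) (ebox a' b' c' d') := by
  rw [Set.disjoint_left]
  rintro q ⟨_, ⟨_, h1⟩⟩ ⟨_, ⟨h2, _⟩⟩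
  linarith

set_option maxHeartbeats 4000000 in
/-- If Wilma plays the regular `2 × 2` grid, Barney can claim more than
`ρ·(1/2 + 1/128) − ε` of the board, i.e., more than 50.78% of its area. -/
theorem stmt_9 (ρ : ℝ) (hρ0 : 0 < ρ) (hρ1 : ρ ≤ 1)
    (W : Set (EuclideanSpace ℝ (Fin 2)))
    (hW : W = {pt (1/4) (ρ/4), pt (3/4) (ρ/4), pt (1/4) (3*ρ/4), pt (3/4) (3*ρ/4)})
    (ε : ℝ) (hε : 0 < ε) :
    ∃ B : Set (EuclideanSpace ℝ (Fin 2)), B ⊆ board ρ ∧ B.Finite ∧ B.ncard = 4 ∧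
      volume {q | q ∈ board ρ ∧ infDist q B < infDist q W} >
        ENNReal.ofReal (ρ * (1/2 + 1/128) - ε) := by
  have hWfin : W.Finite := by
    rw [hW]; exact (((Set.finite_singleton _).insert _).insert _).insert _
  have hWne : W.Nonempty := by rw [hW]; exact ⟨_, Set.mem_insert _ _⟩
  set ε' : ℝ := min ε (ρ/2) with hε'def
  have hε'pos : 0 < ε' := lt_min hε (by linarith)
  have hε'le : ε' ≤ ε := min_le_left _ _
  have hε'ρ : ε' ≤ ρ/2 := min_le_right _ _
  have hε'1 : ε' ≤ 1/2 := by linarith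
  set δ : ℝ := ε'/100 with hδdef
  have hδpos : 0 < δ := by positivity
  have hδsmall : δ ≤ 1/200 := by rw [hδdef]; linarith
  have hδρ : δ ≤ ρ/200 := by rw [hδdef]; linarith
  refine ⟨{pt (1/2) (ρ/4), pt (1/4 - δ) (ρ/4), pt (3/4 + δ) (ρ/4), pt (1/4 - δ) (3*ρ/4)},
    ?_, Set.toFinite _, ?_, ?_⟩
  · -- B ⊆ board
    intro b hb
    simp only [Set.mem_insert_iff, Set.mem_singleton_iff] at hb
    rcases hb with rfl | rfl | rfl | rfl <;>
      simp only [board, Set.mem_setOf_eq, Set.mem_Icc, pt_zero, pt_one] <;>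
      constructor <;> constructor <;> linarith
  · -- ncard = 4
    have hd01 : pt (1/2) (ρ/4) ≠ pt (1/4 - δ) (ρ/4) := fun h => by
      have := (pt_inj h).1; linarith
    have hd02 : pt (1/2) (ρ/4) ≠ pt (3/4 + δ) (ρ/4) := fun h => by
      have := (pt_inj h).1; linarith
    have hd03 : pt (1/2) (ρ/4) ≠ pt (1/4 - δ) (3*ρ/4) := fun h => by
      have := (pt_inj h).1; linarith
    have hd12 : pt (1/4 - δ) (ρ/4) ≠ pt (3/4 + δ) (ρ/4) := fun h => by
      have := (pt_inj h).1; linarith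
    have hd13 : pt (1/4 - δ) (ρ/4) ≠ pt (1/4 - δ) (3*ρ/4) := fun h => by
      have := (pt_inj h).2; linarith
    have hd23 : pt (3/4 + δ) (ρ/4) ≠ pt (1/4 - δ) (3*ρ/4) := fun h => by
      have := (pt_inj h).1; linarith
    rw [Set.ncard_insert_of_notMem (by
        simp only [Set.mem_insert_iff, Set.mem_singleton_iff]
        push_neg
        exact ⟨hd01, hd02, hd03⟩),
      Set.ncard_insert_of_notMem (by
        simp only [Set.mem_insert_iff, Set.mem_singleton_iff]
        push_neg
        exact ⟨hd12, hd13⟩),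
      Set.ncard_insert_of_notMem (by simpa using hd23),
      Set.ncard_singleton]

  · -- the measure bound
    set Bs : Set (EuclideanSpace ℝ (Fin 2)) :=
      {pt (1/2) (ρ/4), pt (1/4 - δ) (ρ/4), pt (3/4 + δ) (ρ/4), pt (1/4 - δ) (3*ρ/4)} with hBs
    set S : Set (EuclideanSpace ℝ (Fin 2)) :=
      {q | q ∈ board ρ ∧ infDist q Bs < infDist q W} with hSdef
    have hb0mem : pt (1/2) (ρ/4) ∈ Bs := Set.mem_insert _ _
    have hb1mem : pt (1/4 - δ) (ρ/4) ∈ Bs := Set.mem_insert_of_mem _ (Set.mem_insert _ _)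
    have hb2mem : pt (3/4 + δ) (ρ/4) ∈ Bs :=
      Set.mem_insert_of_mem _ (Set.mem_insert_of_mem _ (Set.mem_insert _ _))
    have hb3mem : pt (1/4 - δ) (3*ρ/4) ∈ Bs :=
      Set.mem_insert_of_mem _ (Set.mem_insert_of_mem _ (Set.mem_insert_of_mem _ rfl))
    have hdists : ∀ (q : EuclideanSpace ℝ (Fin 2)) (bx by' : ℝ),
        ((q 0 - bx)^2 + (q 1 - by')^2 < (q 0 - 1/4)^2 + (q 1 - ρ/4)^2) →
        ((q 0 - bx)^2 + (q 1 - by')^2 < (q 0 - 3/4)^2 + (q 1 - ρ/4)^2) →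
        ((q 0 - bx)^2 + (q 1 - by')^2 < (q 0 - 1/4)^2 + (q 1 - 3*ρ/4)^2) →
        ((q 0 - bx)^2 + (q 1 - by')^2 < (q 0 - 3/4)^2 + (q 1 - 3*ρ/4)^2) →
        ∀ w ∈ W, dist q (pt bx by') < dist q w := by
      intro q bx by' h1 h2 h3 h4 w hw
      rw [hW] at hw
      simp only [Set.mem_insert_iff, Set.mem_singleton_iff] at hw
      rcases hw with rfl | rfl | rfl | rfl
      · exact dist_pt_lt h1
      · exact dist_pt_lt h2
      · exact dist_pt_lt h3
      · exact dist_pt_lt h4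
    have hwin : ∀ b ∈ Bs, ∀ q : EuclideanSpace ℝ (Fin 2), q ∈ board ρ →
        (∀ w ∈ W, dist q b < dist q w) → q ∈ S :=
      fun b hb q hq h => ⟨hq, infDist_lt_of hWfin hWne hb h⟩
    -- the four base boxes
    have hA1 : ebox 0 (1/4 - δ) 0 (ρ/2) ⊆ S := by
      rintro q ⟨⟨hx1, hx2⟩, hy1, hy2⟩
      have px1 : (0:ℝ) < ((1/4 - δ) - 1/4) * (2*q 0 - 1/4 - (1/4 - δ)) :=
        mul_pos_of_neg_of_neg (by linarith) (by linarith)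
      have px2 : (0:ℝ) < ((1/4 - δ) - 3/4) * (2*q 0 - 3/4 - (1/4 - δ)) :=
        mul_pos_of_neg_of_neg (by linarith) (by linarith)
      have py2 : (0:ℝ) < (ρ/4 - 3*ρ/4) * (2*q 1 - 3*ρ/4 - ρ/4) :=
        mul_pos_of_neg_of_neg (by linarith) (by linarith)
      exact hwin _ hb1mem q ⟨⟨by linarith, by linarith⟩, by linarith, by linarith⟩
        (hdists q _ _ (by linarith [px1]) (by linarith [px2]) (by linarith [px1, py2])
          (by linarith [px2, py2]))
    have hA2 : ebox 0 (1/4 - δ) (ρ/2) ρ ⊆ S := by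
      rintro q ⟨⟨hx1, hx2⟩, hy1, hy2⟩
      have px1 : (0:ℝ) < ((1/4 - δ) - 1/4) * (2*q 0 - 1/4 - (1/4 - δ)) :=
        mul_pos_of_neg_of_neg (by linarith) (by linarith)
      have px2 : (0:ℝ) < ((1/4 - δ) - 3/4) * (2*q 0 - 3/4 - (1/4 - δ)) :=
        mul_pos_of_neg_of_neg (by linarith) (by linarith)
      have py1 : (0:ℝ) < (3*ρ/4 - ρ/4) * (2*q 1 - ρ/4 - 3*ρ/4) :=
        mul_pos (by linarith) (by linarith)
      exact hwin _ hb3mem q ⟨⟨by linarith, by linarith⟩, by linarith, by linarith⟩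
        (hdists q _ _ (by linarith [px1, py1]) (by linarith [px2, py1]) (by linarith [px1])
          (by linarith [px2]))
    have hA3 : ebox (3/4 + δ) 1 0 (ρ/2) ⊆ S := by
      rintro q ⟨⟨hx1, hx2⟩, hy1, hy2⟩
      have px1 : (0:ℝ) < ((3/4 + δ) - 1/4) * (2*q 0 - 1/4 - (3/4 + δ)) :=
        mul_pos (by linarith) (by linarith)
      have px2 : (0:ℝ) < ((3/4 + δ) - 3/4) * (2*q 0 - 3/4 - (3/4 + δ)) :=
        mul_pos (by linarith) (by linarith)
      have py2 : (0:ℝ) < (ρ/4 - 3*ρ/4) * (2*q 1 - 3*ρ/4 - ρ/4) :=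
        mul_pos_of_neg_of_neg (by linarith) (by linarith)
      exact hwin _ hb2mem q ⟨⟨by linarith, by linarith⟩, by linarith, by linarith⟩
        (hdists q _ _ (by linarith [px1]) (by linarith [px2]) (by linarith [px1, py2])
          (by linarith [px2, py2]))
    have hA4 : ebox (3/8) (5/8) 0 (ρ/2) ⊆ S := by
      rintro q ⟨⟨hx1, hx2⟩, hy1, hy2⟩
      have px1 : (0:ℝ) < ((1/2 : ℝ) - 1/4) * (2*q 0 - 1/4 - 1/2) :=
        mul_pos (by norm_num) (by linarith)
      have px2 : (0:ℝ) < ((1/2 : ℝ) - 3/4) * (2*q 0 - 3/4 - 1/2) :=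
        mul_pos_of_neg_of_neg (by norm_num) (by linarith)
      have py2 : (0:ℝ) < (ρ/4 - 3*ρ/4) * (2*q 1 - 3*ρ/4 - ρ/4) :=
        mul_pos_of_neg_of_neg (by linarith) (by linarith)
      exact hwin _ hb0mem q ⟨⟨by linarith, by linarith⟩, by linarith, by linarith⟩
        (hdists q _ _ (by linarith [px1]) (by linarith [px2]) (by linarith [px1, py2])
          (by linarith [px2, py2]))
    -- the bonus region, claimed by the midpoint attacker pt (1/2) (ρ/4)
    set Bon : Set (EuclideanSpace ℝ (Fin 2)) := {q | 3/8 < q 0 ∧ q 0 < 5/8 ∧ ρ/2 < q 1 ∧ q 1 < ρ ∧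
      2*ρ*(q 1 - ρ/2) < q 0 - 3/8 ∧ 2*ρ*(q 1 - ρ/2) < 5/8 - q 0} with hBon
    have hBonS : Bon ⊆ S := by
      rintro q ⟨h1, h2, h3, h4, h5, h6⟩
      have px1 : (0:ℝ) < ((1/2 : ℝ) - 1/4) * (2*q 0 - 1/4 - 1/2) :=
        mul_pos (by norm_num) (by linarith)
      have px2 : (0:ℝ) < ((1/2 : ℝ) - 3/4) * (2*q 0 - 3/4 - 1/2) :=
        mul_pos_of_neg_of_neg (by norm_num) (by linarith)
      exact hwin _ hb0mem q ⟨⟨by linarith, by linarith⟩, by linarith, by linarith⟩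
        (hdists q _ _ (by linarith [px1]) (by linarith [px2]) (by linarith [h5])
          (by linarith [h6]))
    -- the key reduction
    have key : ∀ Δ : Set (EuclideanSpace ℝ (Fin 2)), MeasurableSet Δ → Δ ⊆ Bon →
        ENNReal.ofReal (ρ/128 - ε'/2) ≤ volume Δ →
        volume S > ENNReal.ofReal (ρ * (1/2 + 1/128) - ε) := by
      intro Δ hΔm hΔsub hΔvol
      have hΔS : Δ ⊆ S := fun q hq => hBonS (hΔsub hq)
      have hdA1Δ : Disjoint (ebox 0 (1/4 - δ) 0 (ρ/2)) Δ := by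
        rw [Set.disjoint_left]
        rintro q ⟨⟨_, h1⟩, _⟩ hq
        obtain ⟨h2, _, _, _, _, _⟩ := hΔsub hq
        linarith
      have hdA2Δ : Disjoint (ebox 0 (1/4 - δ) (ρ/2) ρ) Δ := by
        rw [Set.disjoint_left]
        rintro q ⟨⟨_, h1⟩, _⟩ hq
        obtain ⟨h2, _, _, _, _, _⟩ := hΔsub hq
        linarith
      have hdA3Δ : Disjoint (ebox (3/4 + δ) 1 0 (ρ/2)) Δ := by
        rw [Set.disjoint_left]
        rintro q ⟨⟨h1, _⟩, _⟩ hq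
        obtain ⟨_, h2, _, _, _, _⟩ := hΔsub hq
        linarith
      have hdA4Δ : Disjoint (ebox (3/8) (5/8) 0 (ρ/2)) Δ := by
        rw [Set.disjoint_left]
        rintro q ⟨_, _, h1⟩ hq
        obtain ⟨_, _, h2, _, _, _⟩ := hΔsub hq
        linarith
      have hμU : volume ((((ebox 0 (1/4 - δ) 0 (ρ/2) ∪ ebox 0 (1/4 - δ) (ρ/2) ρ) ∪
            ebox (3/4 + δ) 1 0 (ρ/2)) ∪ ebox (3/8) (5/8) 0 (ρ/2)) ∪ Δ) =
          volume (ebox 0 (1/4 - δ) 0 (ρ/2)) + volume (ebox 0 (1/4 - δ) (ρ/2) ρ) +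
          volume (ebox (3/4 + δ) 1 0 (ρ/2)) + volume (ebox (3/8) (5/8) 0 (ρ/2)) + volume Δ := by
        rw [measure_union ?d4 hΔm, measure_union ?d3 (ebox_meas _ _ _ _),
          measure_union ?d2 (ebox_meas _ _ _ _), measure_union ?d1 (ebox_meas _ _ _ _)]
        case d1 => exact ebox_disj_y le_rfl
        case d2 =>
          refine Set.disjoint_union_left.mpr ⟨?_, ?_⟩ <;> exact ebox_disj_x (by linarith)
        case d3 =>
          refine Set.disjoint_union_left.mpr ⟨Set.disjoint_union_left.mpr ⟨?_, ?_⟩, ?_⟩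
          · exact ebox_disj_x (by linarith)
          · exact ebox_disj_x (by linarith)
          · exact (ebox_disj_x (by linarith)).symm
        case d4 =>
          exact Set.disjoint_union_left.mpr
            ⟨Set.disjoint_union_left.mpr ⟨Set.disjoint_union_left.mpr ⟨hdA1Δ, hdA2Δ⟩, hdA3Δ⟩, hdA4Δ⟩
      have hUS : (((ebox 0 (1/4 - δ) 0 (ρ/2) ∪ ebox 0 (1/4 - δ) (ρ/2) ρ) ∪
            ebox (3/4 + δ) 1 0 (ρ/2)) ∪ ebox (3/8) (5/8) 0 (ρ/2)) ∪ Δ ⊆ S := by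
        refine Set.union_subset (Set.union_subset (Set.union_subset (Set.union_subset ?_ ?_) ?_) ?_) ?_
        exacts [hA1, hA2, hA3, hA4, hΔS]
      have hvol1 : volume (ebox 0 (1/4 - δ) 0 (ρ/2)) = ENNReal.ofReal ((1/4 - δ) * (ρ/2)) := by
        rw [ebox_vol, ← ENNReal.ofReal_mul (by linarith)]
        norm_num
      have hvol2 : volume (ebox 0 (1/4 - δ) (ρ/2) ρ) = ENNReal.ofReal ((1/4 - δ) * (ρ/2)) := by
        rw [ebox_vol, ← ENNReal.ofReal_mul (by linarith)]
        ring_nf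
      have hvol3 : volume (ebox (3/4 + δ) 1 0 (ρ/2)) = ENNReal.ofReal ((1/4 - δ) * (ρ/2)) := by
        rw [ebox_vol, ← ENNReal.ofReal_mul (by linarith)]
        ring_nf
      have hvol4 : volume (ebox (3/8) (5/8) 0 (ρ/2)) = ENNReal.ofReal ((1/4) * (ρ/2)) := by
        rw [ebox_vol, ← ENNReal.ofReal_mul (by norm_num)]
        norm_num
      have harea : (0:ℝ) ≤ (1/4 - δ) * (ρ/2) := mul_nonneg (by linarith) (by linarith)
      have htot : ENNReal.ofReal ((1/4 - δ) * (ρ/2) + (1/4 - δ) * (ρ/2) + (1/4 - δ) * (ρ/2) +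
            (1/4) * (ρ/2) + (ρ/128 - ε'/2)) ≤ volume S := by
        calc ENNReal.ofReal ((1/4 - δ) * (ρ/2) + (1/4 - δ) * (ρ/2) + (1/4 - δ) * (ρ/2) +
              (1/4) * (ρ/2) + (ρ/128 - ε'/2))
            ≤ ENNReal.ofReal ((1/4 - δ) * (ρ/2) + (1/4 - δ) * (ρ/2) + (1/4 - δ) * (ρ/2) +
              (1/4) * (ρ/2)) + ENNReal.ofReal (ρ/128 - ε'/2) := ENNReal.ofReal_add_le
          _ = ENNReal.ofReal ((1/4 - δ) * (ρ/2)) + ENNReal.ofReal ((1/4 - δ) * (ρ/2)) +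
              ENNReal.ofReal ((1/4 - δ) * (ρ/2)) + ENNReal.ofReal ((1/4) * (ρ/2)) +
              ENNReal.ofReal (ρ/128 - ε'/2) := by
              rw [ENNReal.ofReal_add (by linarith) (by positivity),
                ENNReal.ofReal_add (by linarith) harea,
                ENNReal.ofReal_add harea harea]
          _ ≤ volume (ebox 0 (1/4 - δ) 0 (ρ/2)) + volume (ebox 0 (1/4 - δ) (ρ/2) ρ) +
              volume (ebox (3/4 + δ) 1 0 (ρ/2)) + volume (ebox (3/8) (5/8) 0 (ρ/2)) +
              volume Δ := by
              rw [hvol1, hvol2, hvol3, hvol4]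
              exact add_le_add le_rfl hΔvol
          _ = volume ((((ebox 0 (1/4 - δ) 0 (ρ/2) ∪ ebox 0 (1/4 - δ) (ρ/2) ρ) ∪
              ebox (3/4 + δ) 1 0 (ρ/2)) ∪ ebox (3/8) (5/8) 0 (ρ/2)) ∪ Δ) := hμU.symm
          _ ≤ volume S := measure_mono hUS
      refine lt_of_lt_of_le ?_ htot
      have hd1 : δ*ρ ≤ δ := by
        calc δ*ρ ≤ δ*1 := by
              apply mul_le_mul_of_nonneg_left hρ1 hδpos.le
          _ = δ := by ring
      have hpos : (0:ℝ) < (1/4 - δ) * (ρ/2) + (1/4 - δ) * (ρ/2) + (1/4 - δ) * (ρ/2) +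
          (1/4) * (ρ/2) + (ρ/128 - ε'/2) := by linarith [hd1, hδρ, hε'ρ]
      rw [ENNReal.ofReal_lt_ofReal_iff hpos]
      linarith [hd1]
    rcases le_or_gt (ρ^2) (1/2 : ℝ) with hcase | hcase
    · -- small aspect ratio: a single rectangle suffices
      set m : ℝ := min (ρ/2) (1/(32*ρ)) with hm
      have hm1 : m ≤ ρ/2 := min_le_left _ _
      have hm2 : m ≤ 1/(32*ρ) := min_le_right _ _
      have hm3 : ρ/16 ≤ m := by
        refine le_min (by linarith) ?_
        rw [le_div_iff₀ (by positivity)]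
        linarith [hcase]
      refine key (ebox (7/16) (9/16) (ρ/2) (ρ/2 + m)) (ebox_meas _ _ _ _) ?_ ?_
      · rintro q ⟨⟨hx1, hx2⟩, hy1, hy2⟩
        have h32 : 2*ρ*(1/(32*ρ)) = 1/16 := by field_simp [hρ0.ne']; ring
        have hq : 2*ρ*(q 1 - ρ/2) < 2*ρ*m := by
          have := mul_lt_mul_of_pos_left (show q 1 - ρ/2 < m by linarith)
            (show (0:ℝ) < 2*ρ by linarith)
          linarith
        have hqm : 2*ρ*m ≤ 1/16 := by
          calc 2*ρ*m ≤ 2*ρ*(1/(32*ρ)) := mul_le_mul_of_nonneg_left hm2 (by linarith)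
            _ = 1/16 := h32
        exact ⟨by linarith, by linarith, by linarith, by linarith, by linarith, by linarith⟩
      · rw [ebox_vol, ← ENNReal.ofReal_mul (by norm_num)]
        apply ENNReal.ofReal_le_ofReal
        linarith [hm3, hε'pos]
    · -- large aspect ratio: a staircase of n rectangles under the triangle
      set n : ℕ := ⌈1/ε'⌉₊ + 1 with hn
      have hceil : 0 < ⌈1/ε'⌉₊ := Nat.ceil_pos.mpr (by positivity)
      have hN2 : (2:ℝ) ≤ (n:ℝ) := by
        have : 2 ≤ n := by omega
        exact_mod_cast this
      have hNpos : (0:ℝ) < (n:ℝ) := by linarith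
      have hNε : 1 ≤ ε' * (n:ℝ) := by
        have h1 : (1:ℝ)/ε' ≤ ⌈1/ε'⌉₊ := Nat.le_ceil _
        have h2 : ((⌈1/ε'⌉₊ : ℕ):ℝ) ≤ (n:ℝ) := by
          have : ⌈1/ε'⌉₊ ≤ n := by omega
          exact_mod_cast this
        have h3 : (1:ℝ)/ε' ≤ (n:ℝ) := le_trans h1 h2
        rw [div_le_iff₀ hε'pos] at h3
        linarith
      set w : ℝ := 1/(8*(n:ℝ)) with hw
      have hwpos : 0 < w := by positivity
      have hnw : (n:ℝ) * w = 1/8 := by rw [hw]; field_simp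
      have hρ2 : (1:ℝ)/8 < ρ^2 := by linarith
      set L : ℕ → Set (EuclideanSpace ℝ (Fin 2)) := fun i =>
        ebox (3/8 + (i:ℝ)*w) (3/8 + ((i:ℝ)+1)*w) (ρ/2) (ρ/2 + (i:ℝ)*w/(2*ρ)) with hLdef
      set R : ℕ → Set (EuclideanSpace ℝ (Fin 2)) := fun i =>
        ebox (5/8 - ((i:ℝ)+1)*w) (5/8 - (i:ℝ)*w) (ρ/2) (ρ/2 + (i:ℝ)*w/(2*ρ)) with hRdef
      have hheight : ∀ i : ℕ, (i:ℝ)+1 ≤ (n:ℝ) → (i:ℝ)*w/(2*ρ) ≤ ρ/2 := by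
        intro i hi
        have h1 : (i:ℝ)*w ≤ 1/8 := by
          linarith [mul_le_mul_of_nonneg_right hi hwpos.le,
            mul_nonneg (Nat.cast_nonneg i) hwpos.le]
        rw [div_le_iff₀ (by positivity)]
        linarith [h1, hρ2]
      have hLBon : ∀ i : ℕ, (i:ℝ)+1 ≤ (n:ℝ) → L i ⊆ Bon := by
        intro i hi
        rintro q ⟨⟨hx1, hx2⟩, hy1, hy2⟩
        have hiw0 : 0 ≤ (i:ℝ)*w := mul_nonneg (Nat.cast_nonneg i) hwpos.le
        have hi1w : ((i:ℝ)+1)*w ≤ 1/8 := by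
          linarith [mul_le_mul_of_nonneg_right hi hwpos.le]
        have hh := hheight i hi
        have heq : 2*ρ*((i:ℝ)*w/(2*ρ)) = (i:ℝ)*w := by field_simp [hρ0.ne']
        have hq : 2*ρ*(q 1 - ρ/2) < (i:ℝ)*w := by
          have := mul_lt_mul_of_pos_left (show q 1 - ρ/2 < (i:ℝ)*w/(2*ρ) by linarith)
            (show (0:ℝ) < 2*ρ by linarith)
          linarith [heq, this]
        exact ⟨by linarith, by linarith, by linarith, by linarith, by linarith, by linarith⟩
      have hRBon : ∀ i : ℕ, (i:ℝ)+1 ≤ (n:ℝ) → R i ⊆ Bon := by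
        intro i hi
        rintro q ⟨⟨hx1, hx2⟩, hy1, hy2⟩
        have hiw0 : 0 ≤ (i:ℝ)*w := mul_nonneg (Nat.cast_nonneg i) hwpos.le
        have hi1w : ((i:ℝ)+1)*w ≤ 1/8 := by
          linarith [mul_le_mul_of_nonneg_right hi hwpos.le]
        have hh := hheight i hi
        have heq : 2*ρ*((i:ℝ)*w/(2*ρ)) = (i:ℝ)*w := by field_simp [hρ0.ne']
        have hq : 2*ρ*(q 1 - ρ/2) < (i:ℝ)*w := by
          have := mul_lt_mul_of_pos_left (show q 1 - ρ/2 < (i:ℝ)*w/(2*ρ) by linarith)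
            (show (0:ℝ) < 2*ρ by linarith)
          linarith [heq, this]
        exact ⟨by linarith, by linarith, by linarith, by linarith, by linarith, by linarith⟩
      have hcast : ∀ i : ℕ, i ∈ Finset.range n → (i:ℝ)+1 ≤ (n:ℝ) := by
        intro i hi
        have : i + 1 ≤ n := Finset.mem_range.mp hi
        exact_mod_cast this
      refine key (⋃ i ∈ Finset.range n, (L i ∪ R i)) ?_ ?_ ?_
      · exact (Finset.range n).measurableSet_biUnion
          (fun i _ => (ebox_meas _ _ _ _).union (ebox_meas _ _ _ _))
      · exact Set.iUnion₂_subset fun i hi =>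
          Set.union_subset (hLBon i (hcast i hi)) (hRBon i (hcast i hi))
      · have hdisj : (↑(Finset.range n) : Set ℕ).PairwiseDisjoint (fun i => L i ∪ R i) := by
          intro i hi j hj hij
          simp only [Finset.coe_range, Set.mem_Iio] at hi hj
          have hiw : ((i:ℝ)+1) ≤ (n:ℝ) := by exact_mod_cast hi
          have hjw : ((j:ℝ)+1) ≤ (n:ℝ) := by exact_mod_cast hj
          have hLR : ∀ a b : ℕ, (a:ℝ)+1 ≤ (n:ℝ) → (b:ℝ)+1 ≤ (n:ℝ) → Disjoint (L a) (R b) := by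
            intro a b ha hb
            refine ebox_disj_x ?_
            linarith [mul_le_mul_of_nonneg_right ha hwpos.le,
              mul_le_mul_of_nonneg_right hb hwpos.le]
          have hon : (Function.onFun Disjoint (fun i => L i ∪ R i)) i j := by
            rcases lt_or_gt_of_ne hij with h | h
            · have hc : (i:ℝ)+1 ≤ (j:ℝ) := by exact_mod_cast h
              refine Set.disjoint_union_left.mpr ⟨?_, ?_⟩ <;>
                refine Set.disjoint_union_right.mpr ⟨?_, ?_⟩
              · exact ebox_disj_x (by linarith [mul_le_mul_of_nonneg_right hc hwpos.le])
              · exact hLR i j hiw hjw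
              · exact (hLR j i hjw hiw).symm
              · exact (ebox_disj_x (by
                  linarith [mul_le_mul_of_nonneg_right hc hwpos.le])).symm
            · have hc : (j:ℝ)+1 ≤ (i:ℝ) := by exact_mod_cast h
              refine Set.disjoint_union_left.mpr ⟨?_, ?_⟩ <;>
                refine Set.disjoint_union_right.mpr ⟨?_, ?_⟩
              · exact (ebox_disj_x (by
                  linarith [mul_le_mul_of_nonneg_right hc hwpos.le])).symm
              · exact hLR i j hiw hjw
              · exact (hLR j i hjw hiw).symm
              · exact ebox_disj_x (by linarith [mul_le_mul_of_nonneg_right hc hwpos.le])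
          exact hon
        have hvol_t : ∀ i ∈ Finset.range n, volume (L i ∪ R i) =
            ENNReal.ofReal ((i:ℝ)*w^2/ρ) := by
          intro i hi
          have hi' : (i:ℝ)+1 ≤ (n:ℝ) := hcast i hi
          have hdLR : Disjoint (L i) (R i) := by
            refine ebox_disj_x ?_
            linarith [mul_le_mul_of_nonneg_right hi' hwpos.le]
          simp only [hLdef, hRdef]
          rw [measure_union hdLR (ebox_meas _ _ _ _), ebox_vol, ebox_vol]
          have e1 : (3/8 + ((i:ℝ)+1)*w) - (3/8 + (i:ℝ)*w) = w := by ring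
          have e2 : (ρ/2 + (i:ℝ)*w/(2*ρ)) - ρ/2 = (i:ℝ)*w/(2*ρ) := by ring
          have e3 : (5/8 - (i:ℝ)*w) - (5/8 - ((i:ℝ)+1)*w) = w := by ring
          rw [e1, e2, e3, ← ENNReal.ofReal_mul hwpos.le,
            ← ENNReal.ofReal_add (by positivity) (by positivity)]
          congr 1
          field_simp
          ring
        rw [measure_biUnion_finset hdisj
          (fun i _ => (ebox_meas _ _ _ _).union (ebox_meas _ _ _ _)),
          Finset.sum_congr rfl hvol_t,
          ← ENNReal.ofReal_sum_of_nonneg (fun i _ => by positivity)]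
        apply ENNReal.ofReal_le_ofReal
        have gauss : ∑ i ∈ Finset.range n, (i:ℝ) = (n:ℝ)*((n:ℝ)-1)/2 := by
          have h2 : ((∑ i ∈ Finset.range n, i : ℕ) : ℝ) * 2 = (n:ℝ) * ((n:ℝ) - 1) := by
            calc ((∑ i ∈ Finset.range n, i : ℕ) : ℝ) * 2
                = (((∑ i ∈ Finset.range n, i) * 2 : ℕ) : ℝ) := by push_cast; ring
              _ = ((n * (n-1) : ℕ) : ℝ) := by rw [Finset.sum_range_id_mul_two]
              _ = (n:ℝ) * ((n:ℝ)-1) := by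
                  rw [Nat.cast_mul, Nat.cast_sub (show 1 ≤ n by omega)]
                  push_cast
                  ring
          have h3 : ∑ i ∈ Finset.range n, (i:ℝ) = ((∑ i ∈ Finset.range n, i : ℕ) : ℝ) := by
            push_cast
            rfl
          rw [h3]
          linarith
        have hsum : ∑ i ∈ Finset.range n, (i:ℝ)*w^2/ρ = ((n:ℝ)*((n:ℝ)-1)/2) * (w^2/ρ) := by
          have e : ∀ i ∈ Finset.range n, (i:ℝ)*w^2/ρ = (i:ℝ)*(w^2/ρ) := fun i _ => by ring
          rw [Finset.sum_congr rfl e, ← Finset.sum_mul, gauss]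
        have efin : ((n:ℝ)*((n:ℝ)-1)/2) * (w^2/ρ) = ((n:ℝ)-1)/(128*(n:ℝ)*ρ) := by
          rw [hw]
          field_simp [hρ0.ne']
          ring
        rw [hsum, efin, le_div_iff₀ (by positivity)]
        have f1 : 0 ≤ (n:ℝ)*ρ*(1-ρ) := mul_nonneg (mul_nonneg hNpos.le hρ0.le) (by linarith)
        have f2 : ρ ≤ ε'*(n:ℝ)*ρ := by linarith [mul_le_mul_of_nonneg_right hNε hρ0.le]
        have f3 : 2*(1-ρ) ≤ (n:ℝ)*(1-ρ) := mul_le_mul_of_nonneg_right hN2 (by linarith)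
        linarith [f1, f2, f3]
end

section
/- Let C ⊆ ℝ² be a compact convex set with μ(C) > 0 and let w ∈ C. Suppose that every closed half-plane whose boundary line passes through w contains exactly half the area of C, i.e., for every unit vector u ∈ ℝ², μ(C ∩ {q : ⟪q − w, u⟫ ≥ 0}) = μ(C)/2. Then C is point symmetric about w: for every q ∈ ℝ², q ∈ C if and only if 2w − q ∈ C. -/
open MeasureTheory Metric Set Pointwise
open scoped ENNReal RealInnerProductSpace

set_option maxHeartbeats 1000000

namespace Stmt14Aux

abbrev E := EuclideanSpace ℝ (Fin 2)

/-- The closed half-plane through `w` with inner normal `u`. -/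
def H (w u : E) : Set E := {q | 0 ≤ ⟪q - w, u⟫}

lemma isClosed_H (w u : E) : IsClosed (H w u) :=
  isClosed_le continuous_const ((continuous_id.sub continuous_const).inner continuous_const)

lemma measurableSet_H (w u : E) : MeasurableSet (H w u) := (isClosed_H w u).measurableSet

lemma hyper_null (w v : E) (hv : v ≠ 0) : volume {q : E | ⟪q - w, v⟫ = 0} = 0 := by
  have hset : {q : E | ⟪q - w, v⟫ = 0} ⊆ (AffineSubspace.mk' w (ℝ ∙ v)ᗮ : Set E) := by
    intro q hq
    rw [AffineSubspace.mem_coe, AffineSubspace.mem_mk',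
      Submodule.mem_orthogonal_singleton_iff_inner_left]
    simpa [real_inner_comm] using hq
  refine measure_mono_null hset ?_
  apply Measure.addHaar_affineSubspace
  intro htop
  have hdir : (AffineSubspace.mk' w (ℝ ∙ v)ᗮ).direction = ⊤ := by
    rw [htop, AffineSubspace.direction_top]
  rw [AffineSubspace.direction_mk'] at hdir
  have hvmem : v ∈ (ℝ ∙ v)ᗮ := by rw [hdir]; trivial
  rw [Submodule.mem_orthogonal_singleton_iff_inner_left] at hvmem
  exact hv (inner_self_eq_zero.mp hvmem)

lemma split (w v : E) (hv : v ≠ 0) (S : Set E) (hS : MeasurableSet S) :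
    volume (S ∩ H w v) + volume (S ∩ H w (-v)) = volume S := by
  have hu : (S ∩ H w v) ∪ (S ∩ H w (-v)) = S := by
    ext q
    simp only [H, mem_union, mem_inter_iff, mem_setOf_eq, inner_neg_right]
    constructor
    · rintro (⟨h, _⟩ | ⟨h, _⟩) <;> exact h
    · intro h
      rcases le_total 0 ⟪q - w, v⟫ with h' | h'
      · exact Or.inl ⟨h, h'⟩
      · exact Or.inr ⟨h, by linarith⟩
  have hnull : volume ((S ∩ H w v) ∩ (S ∩ H w (-v))) = 0 := by
    refine measure_mono_null ?_ (hyper_null w v hv)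
    rintro q ⟨⟨_, h1⟩, ⟨_, h2⟩⟩
    simp only [H, mem_setOf_eq, inner_neg_right] at h1 h2 ⊢
    linarith
  have hkey := measure_union_add_inter (μ := volume) (S ∩ H w v)
    (hS.inter (measurableSet_H w (-v)))
  rw [hu, hnull, add_zero] at hkey
  exact hkey.symm

lemma wedge_symm (C : Set E) (hC : MeasurableSet C) (hfin : volume C ≠ ⊤) (w : E)
    (hhalf : ∀ u : E, ‖u‖ = 1 → volume (C ∩ H w u) = volume C / 2)
    (u v : E) (hu : ‖u‖ = 1) (hv : ‖v‖ = 1) :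
    volume (C ∩ H w u ∩ H w v) = volume (C ∩ H w (-u) ∩ H w (-v)) := by
  have hu0 : u ≠ 0 := fun h => by simp [h] at hu
  have hv0 : v ≠ 0 := fun h => by simp [h] at hv
  have e1 := split w v hv0 (C ∩ H w u) (hC.inter (measurableSet_H w u))
  have e2 := split w (-u) (neg_ne_zero.mpr hu0) (C ∩ H w (-v))
    (hC.inter (measurableSet_H w (-v)))
  rw [neg_neg] at e2
  rw [hhalf u hu] at e1
  rw [hhalf (-v) (by simpa using hv)] at e2
  have hs1 : C ∩ H w (-v) ∩ H w u = C ∩ H w u ∩ H w (-v) := by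
    rw [inter_assoc, inter_assoc, inter_comm (H w (-v))]
  have hs2 : C ∩ H w (-v) ∩ H w (-u) = C ∩ H w (-u) ∩ H w (-v) := by
    rw [inter_assoc, inter_assoc, inter_comm (H w (-v))]
  rw [hs1, hs2] at e2
  have hXfin : volume (C ∩ H w u ∩ H w (-v)) ≠ ⊤ := by
    refine (lt_of_le_of_lt (measure_mono ?_) (lt_top_iff_ne_top.mpr hfin)).ne
    exact inter_subset_left.trans inter_subset_left
  have hcomb : volume (C ∩ H w u ∩ H w v) + volume (C ∩ H w u ∩ H w (-v))
      = volume (C ∩ H w (-u) ∩ H w (-v)) + volume (C ∩ H w u ∩ H w (-v)) := by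
    rw [e1, ← e2]
  exact WithTop.add_right_cancel hXfin hcomb

lemma unit_combo {σ κ : ℝ} {d e : E} (hd : ‖d‖ = 1) (he : ‖e‖ = 1) (hde : ⟪d, e⟫ = 0)
    (h : σ ^ 2 + κ ^ 2 = 1) : ‖σ • d + κ • e‖ = 1 := by
  have h3 : ‖σ • d + κ • e‖ ^ 2 = 1 := by
    rw [norm_add_sq_real, real_inner_smul_left, real_inner_smul_right, hde, norm_smul, norm_smul,
      hd, he]
    simp only [Real.norm_eq_abs, mul_one]
    nlinarith [sq_abs σ, sq_abs κ]
  nlinarith [norm_nonneg (σ • d + κ • e)]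

lemma exists_ortho (d : E) (hd : ‖d‖ = 1) :
    ∃ e : E, ‖e‖ = 1 ∧ ⟪d, e⟫ = 0 ∧ ∀ z : E, ⟪z, d⟫ ^ 2 + ⟪z, e⟫ ^ 2 = ‖z‖ ^ 2 := by
  have hinner : ∀ x y : E, ⟪x, y⟫ = x 0 * y 0 + x 1 * y 1 := by
    intro x y; simp [PiLp.inner_apply, Fin.sum_univ_two, RCLike.inner_apply]; ring
  have hsq : ∀ x : E, ‖x‖ ^ 2 = x 0 ^ 2 + x 1 ^ 2 := by
    intro x
    rw [← real_inner_self_eq_norm_sq, hinner]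
    ring
  have hd2 : d 0 ^ 2 + d 1 ^ 2 = 1 := by rw [← hsq, hd]; norm_num
  refine ⟨(WithLp.equiv 2 (Fin 2 → ℝ)).symm ![-(d 1), d 0], ?_, ?_, ?_⟩
  · have h1 : ‖(WithLp.equiv 2 (Fin 2 → ℝ)).symm ![-(d 1), d 0]‖ ^ 2 = 1 := by
      rw [hsq]
      simp [WithLp.equiv_symm_apply, PiLp.toLp_apply]
      nlinarith [hd2]
    nlinarith [norm_nonneg ((WithLp.equiv 2 (Fin 2 → ℝ)).symm ![-(d 1), d 0])]
  · rw [hinner]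
    simp [WithLp.equiv_symm_apply, PiLp.toLp_apply]
    ring
  · intro z
    rw [hinner, hinner, hsq]
    simp only [WithLp.equiv_symm_apply, PiLp.toLp_apply, WithLp.ofLp_toLp, Matrix.cons_val_zero, Matrix.cons_val_one,
      Matrix.head_cons]
    linear_combination (z 0 ^ 2 + z 1 ^ 2) * hd2

lemma arith_ka {σ κ a b t : ℝ} (hκ : 0 < κ) (hσ : 0 < σ) (ht : 0 < t)
    (hσκ : σ ^ 2 + κ ^ 2 = 1) (hab : a ^ 2 + b ^ 2 = t ^ 2)
    (h1 : 0 ≤ σ * a + κ * b) (h2 : 0 ≤ σ * a - κ * b) : κ * t ≤ a := by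
  have ha0 : 0 ≤ a := by nlinarith
  nlinarith [mul_nonneg h1 h2, mul_pos hκ ht, sq_nonneg (a - κ * t), sq_nonneg (a + κ * t)]

lemma key (A B : Set E) (hA : Convex ℝ A) (hB : Convex ℝ B)
    (hBc : IsClosed B) (hBb : Bornology.IsBounded B)
    (w : E) (hwA : w ∈ interior A) (hwB : w ∈ B)
    (heq : ∀ u v : E, ‖u‖ = 1 → ‖v‖ = 1 →
      volume (A ∩ H w u ∩ H w v) = volume (B ∩ H w u ∩ H w v)) :
    A ⊆ B := by
  intro x hxA
  by_contra hxB
  have hBne : B.Nonempty := ⟨w, hwB⟩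
  have hxw : x ≠ w := fun h => hxB (h ▸ hwB)
  set D := ‖x - w‖ with hDdef
  have hD0 : 0 < D := by rw [hDdef, norm_pos_iff]; exact sub_ne_zero.mpr hxw
  set d : E := D⁻¹ • (x - w) with hddef
  have hd : ‖d‖ = 1 := by
    rw [hddef, norm_smul, Real.norm_eq_abs, abs_inv, abs_of_pos hD0, ← hDdef]
    field_simp
  have hxd : x = w + D • d := by
    rw [hddef, smul_smul, mul_inv_cancel₀ hD0.ne', one_smul]
    abel
  obtain ⟨e, he, hde, hpyth⟩ := exists_ortho d hd
  clear_value D d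
  have h2r : 0 < infDist x B := (hBc.notMem_iff_infDist_pos hBne).mp hxB
  set r : ℝ := infDist x B / 2 with hrdef
  have hr0 : 0 < r := half_pos h2r
  clear_value r
  set ε : ℝ := min r (D / 2) with hεdef
  have hε0 : 0 < ε := lt_min hr0 (half_pos hD0)
  have hεr : ε ≤ r := min_le_left _ _
  have hεD : ε ≤ D / 2 := min_le_right _ _
  clear_value ε
  set s : ℝ := D - ε with hsdef
  have hs0 : 0 < s := by rw [hsdef]; linarith
  have hsD : s < D := by rw [hsdef]; linarith
  clear_value s
  set p0 : E := w + s • d with hp0def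
  have hp0 : p0 ∈ interior A := by
    have hcombo := hA.combo_interior_self_mem_interior hwA hxA (a := ε / D) (b := s / D)
      (by positivity) (by positivity)
      (by rw [← add_div, hsdef]; field_simp; ring)
    have hrep : (ε / D) • w + (s / D) • x = p0 := by
      rw [hxd, hp0def, smul_add, smul_smul, div_mul_cancel₀ _ hD0.ne', ← add_assoc, ← add_smul]
      have h1 : ε / D + s / D = 1 := by rw [← add_div, hsdef]; field_simp; ring
      rw [h1, one_smul]
    rwa [hrep] at hcombo
  clear_value p0
  obtain ⟨ρ0, hρ00, hρ0⟩ : ∃ ρ0 > 0, ball p0 ρ0 ⊆ interior A :=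
    Metric.mem_nhds_iff.mp (isOpen_interior.mem_nhds hp0)
  obtain ⟨R0, hR0ball⟩ := hBb.subset_closedBall w
  set R : ℝ := max (max R0 D) 1 with hRdef
  have hRD : D ≤ R := le_max_of_le_left (le_max_right _ _)
  have hR1 : (1 : ℝ) ≤ R := le_max_right _ _
  have hRpos : 0 < R := lt_of_lt_of_le one_pos hR1
  have hRB : ∀ y ∈ B, ‖y - w‖ ≤ R := by
    intro y hy
    have h1 := hR0ball hy
    rw [mem_closedBall, dist_eq_norm] at h1
    exact h1.trans (le_max_of_le_left (le_max_left _ _))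
  have hsR : s ≤ R := le_trans hsD.le hRD
  clear_value R
  have hL : ∀ t : ℝ, s ≤ t → t ≤ R → w + t • d ∉ B := by
    intro t hts htR hmem
    rcases le_or_gt t D with htD | htD
    · have hdist : dist x (w + t • d) = D - t := by
        rw [hxd, dist_eq_norm]
        have h1 : w + D • d - (w + t • d) = (D - t) • d := by rw [sub_smul]; abel
        rw [h1, norm_smul, hd, mul_one, Real.norm_eq_abs, abs_of_nonneg (by linarith)]
      have h1 : infDist x B ≤ D - t := hdist ▸ infDist_le_dist_of_mem hmem
      have h2 : D - t ≤ ε := by rw [hsdef] at hts; linarith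
      rw [hrdef] at hεr
      linarith
    · have ht0 : (0 : ℝ) < t := lt_trans hD0 htD
      have hx' : x = (1 - D / t) • w + (D / t) • (w + t • d) := by
        rw [smul_add, smul_smul, div_mul_cancel₀ _ ht0.ne', hxd, sub_smul, one_smul]
        abel
      have hxmem : x ∈ B := by
        rw [hx']
        refine hB hwB hmem ?_ (by positivity) (by ring)
        have : D / t ≤ 1 := by rw [div_le_one ht0]; linarith
        linarith
      exact hxB hxmem
  have hcont : ContinuousOn (fun t : ℝ => infDist (w + t • d) B) (Icc s R) :=
    ((continuous_infDist_pt B).comp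
      (continuous_const.add (continuous_id.smul continuous_const))).continuousOn
  obtain ⟨t0, ht0mem, ht0min⟩ := isCompact_Icc.exists_isMinOn (nonempty_Icc.mpr hsR) hcont
  set ρ' : ℝ := infDist (w + t0 • d) B with hρ'def
  have hρ'0 : 0 < ρ' := (hBc.notMem_iff_infDist_pos hBne).mp (hL t0 ht0mem.1 ht0mem.2)
  have hρ'le : ∀ t, s ≤ t → t ≤ R → ρ' ≤ infDist (w + t • d) B := fun t h1 h2 =>
    ht0min ⟨h1, h2⟩
  clear_value ρ'
  set m : ℝ := min ρ' ρ0 with hmdef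
  have hm0 : 0 < m := lt_min hρ'0 hρ00
  have hmρ' : m ≤ ρ' := min_le_left _ _
  have hmρ0 : m ≤ ρ0 := min_le_right _ _
  set κ : ℝ := 1 - (min m R) ^ 2 / (4 * R ^ 2) with hκdef
  have hmR0 : 0 < min m R := lt_min hm0 hRpos
  have hκlt : κ < 1 := by
    rw [hκdef]
    have : 0 < (min m R) ^ 2 / (4 * R ^ 2) := by positivity
    linarith
  have hκpos : 0 < κ := by
    have h1 : min m R ≤ R := min_le_right _ _
    have h2 : (min m R) ^ 2 ≤ R ^ 2 := pow_le_pow_left₀ hmR0.le h1 2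
    rw [hκdef]
    have h3 : (min m R) ^ 2 / (4 * R ^ 2) ≤ 1 / 4 := by
      rw [div_le_div_iff₀ (by positivity) (by norm_num)]
      linarith
    linarith
  have h2κ : (2 - 2 * κ) * R ^ 2 < m ^ 2 := by
    have hle : min m R ≤ m := min_le_left _ _
    have h1 : (2 - 2 * κ) * R ^ 2 = (min m R) ^ 2 / 2 := by
      rw [hκdef]; field_simp; ring
    rw [h1]
    have h4 : (min m R) ^ 2 ≤ m ^ 2 := pow_le_pow_left₀ hmR0.le hle 2
    have h5 : 0 < m ^ 2 := by positivity
    linarith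
  have h2κ0 : 0 ≤ 2 - 2 * κ := by linarith
  clear_value m κ
  set σ : ℝ := Real.sqrt (1 - κ ^ 2) with hσdef
  have hκ2 : κ ^ 2 < 1 := by
    have := pow_lt_one₀ hκpos.le hκlt (two_ne_zero)
    simpa using this
  have hσ0 : 0 < σ := Real.sqrt_pos.mpr (by linarith)
  have hσκ : σ ^ 2 + κ ^ 2 = 1 := by
    rw [hσdef, Real.sq_sqrt (by linarith)]; ring
  clear_value σ
  set u : E := σ • d + κ • e with hudef
  set v : E := σ • d - κ • e with hvdef
  have hu : ‖u‖ = 1 := unit_combo hd he hde hσκ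
  have hv : ‖v‖ = 1 := by
    rw [hvdef, sub_eq_add_neg, ← neg_smul]
    exact unit_combo hd he hde (by rw [neg_sq]; exact hσκ)
  have hdd : ⟪d, d⟫ = 1 := by rw [real_inner_self_eq_norm_sq, hd]; norm_num
  have hdu : ⟪d, u⟫ = σ := by
    rw [hudef, inner_add_right, real_inner_smul_right, real_inner_smul_right, hde, hdd]
    ring
  have hdv : ⟪d, v⟫ = σ := by
    rw [hvdef, inner_sub_right, real_inner_smul_right, real_inner_smul_right, hde, hdd]
    ring
  clear_value u v
  have hBA : ∀ y, y ∈ B → 0 ≤ ⟪y - w, u⟫ → 0 ≤ ⟪y - w, v⟫ → y ∈ A := by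
    intro y hyB hyu hyv
    rcases eq_or_ne y w with hyw | hyw
    · rw [hyw]; exact interior_subset hwA
    set z : E := y - w with hzdef
    set t : ℝ := ‖z‖ with htdef
    have ht0 : 0 < t := by rw [htdef, hzdef, norm_pos_iff]; exact sub_ne_zero.mpr hyw
    set a : ℝ := ⟪z, d⟫ with hadef
    set b : ℝ := ⟪z, e⟫ with hbdef
    have hab : a ^ 2 + b ^ 2 = t ^ 2 := hpyth z
    have h1 : 0 ≤ σ * a + κ * b := by
      have := hyu
      rw [hudef, inner_add_right, real_inner_smul_right, real_inner_smul_right] at this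
      exact this
    have h2 : 0 ≤ σ * a - κ * b := by
      have := hyv
      rw [hvdef, inner_sub_right, real_inner_smul_right, real_inner_smul_right] at this
      exact this
    clear_value z t a b
    have hka : κ * t ≤ a := arith_ka hκpos hσ0 ht0 hσκ hab h1 h2
    have hzd : ‖z - t • d‖ ^ 2 ≤ (2 - 2 * κ) * t ^ 2 := by
      have hexp : ‖z - t • d‖ ^ 2 = t ^ 2 - 2 * (t * a) + t ^ 2 := by
        rw [norm_sub_sq_real, real_inner_smul_right, norm_smul, Real.norm_eq_abs, hd, mul_one,
          sq_abs, ← htdef, ← hadef]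
      rw [hexp]
      linarith [mul_le_mul_of_nonneg_left hka ht0.le]
    have htR : t ≤ R := by rw [htdef, hzdef]; exact hRB y hyB
    have hts : t < s := by
      by_contra hc
      push_neg at hc
      have h3 : ρ' ≤ dist (w + t • d) y :=
        (hρ'le t hc htR).trans (infDist_le_dist_of_mem hyB)
      have h4 : dist (w + t • d) y = ‖z - t • d‖ := by
        rw [dist_eq_norm, hzdef, show w + t • d - y = -(y - w - t • d) by abel, norm_neg]
      rw [h4] at h3
      have e1 : ρ' ^ 2 ≤ ‖z - t • d‖ ^ 2 := pow_le_pow_left₀ hρ'0.le h3 2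
      have e2 : t ^ 2 ≤ R ^ 2 := pow_le_pow_left₀ ht0.le htR 2
      have e3 : (2 - 2 * κ) * t ^ 2 ≤ (2 - 2 * κ) * R ^ 2 :=
        mul_le_mul_of_nonneg_left e2 h2κ0
      have e4 : m ^ 2 ≤ ρ' ^ 2 := pow_le_pow_left₀ hm0.le hmρ' 2
      linarith
    have hq1 : w + (s / t) • z ∈ A := by
      apply interior_subset
      apply hρ0
      rw [mem_ball, dist_eq_norm]
      have heq2 : w + (s / t) • z - p0 = (s / t) • (z - t • d) := by
        rw [hp0def, smul_sub, smul_smul, div_mul_cancel₀ _ ht0.ne']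
        abel
      rw [heq2, norm_smul, Real.norm_eq_abs, abs_of_pos (by positivity)]
      have hn : (0 : ℝ) ≤ ‖z - t • d‖ := norm_nonneg _
      have hsq : (s / t * ‖z - t • d‖) ^ 2 ≤ (s / t) ^ 2 * ((2 - 2 * κ) * t ^ 2) := by
        rw [mul_pow]
        exact mul_le_mul_of_nonneg_left hzd (sq_nonneg _)
      have hss : (s / t) ^ 2 * ((2 - 2 * κ) * t ^ 2) = (2 - 2 * κ) * s ^ 2 := by
        field_simp
      have hs2R : (2 - 2 * κ) * s ^ 2 ≤ (2 - 2 * κ) * R ^ 2 :=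
        mul_le_mul_of_nonneg_left (pow_le_pow_left₀ hs0.le hsR 2) h2κ0
      have hm2 : m ^ 2 ≤ ρ0 ^ 2 := pow_le_pow_left₀ hm0.le hmρ0 2
      have hfin2 : (s / t * ‖z - t • d‖) ^ 2 < ρ0 ^ 2 := by linarith
      exact lt_of_pow_lt_pow_left₀ 2 hρ00.le hfin2
    have hyrep : y = (1 - t / s) • w + (t / s) • (w + (s / t) • z) := by
      rw [smul_add, smul_smul]
      have h5 : t / s * (s / t) = 1 := by field_simp
      rw [h5, one_smul, sub_smul, one_smul, hzdef]
      abel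
    rw [hyrep]
    refine hA (interior_subset hwA) hq1 ?_ (by positivity) (by ring)
    have : t / s ≤ 1 := by rw [div_le_one hs0]; exact hts.le
    linarith
  set W : Set E := H w u ∩ H w v with hWdef
  have hsubBW : B ∩ W ⊆ A ∩ W := by
    rintro y ⟨hyB, hyW⟩
    exact ⟨hBA y hyB hyW.1 hyW.2, hyW⟩
  set ρ1 : ℝ := min (min ρ0 r) (σ * s) with hρ1def
  have hρ10 : 0 < ρ1 := lt_min (lt_min hρ00 hr0) (by positivity)
  have hρ1ρ0 : ρ1 ≤ ρ0 := (min_le_left _ _).trans (min_le_left _ _)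
  have hρ1r : ρ1 ≤ r := (min_le_left _ _).trans (min_le_right _ _)
  have hρ1σs : ρ1 ≤ σ * s := min_le_right _ _
  have hballA : ball p0 ρ1 ⊆ A ∩ W := by
    intro q hq
    have hqd : dist q p0 < ρ1 := mem_ball.mp hq
    constructor
    · exact interior_subset (hρ0 (mem_ball.mpr (lt_of_lt_of_le hqd hρ1ρ0)))
    · have hkey : ∀ u' : E, ‖u'‖ = 1 → ⟪d, u'⟫ = σ → 0 ≤ ⟪q - w, u'⟫ := by
        intro u' hu' hdu'
        have hsplit : ⟪q - w, u'⟫ = ⟪p0 - w, u'⟫ + ⟪q - p0, u'⟫ := by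
          rw [← inner_add_left]
          congr 1
          abel
        have h5 : ⟪p0 - w, u'⟫ = s * σ := by
          rw [hp0def, show w + s • d - w = s • d by abel, real_inner_smul_left, hdu']
        have h6 : |⟪q - p0, u'⟫| ≤ ‖q - p0‖ * ‖u'‖ := abs_real_inner_le_norm _ _
        have h7 : ‖q - p0‖ < ρ1 := by rw [← dist_eq_norm]; exact hqd
        rw [hu', mul_one] at h6
        have h8 := (abs_le.mp h6).1
        rw [hsplit, h5]
        linarith
      exact ⟨hkey u hu hdu, hkey v hv hdv⟩
  have hdisj : Disjoint (B ∩ W) (ball p0 ρ1) := by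
    rw [Set.disjoint_left]
    rintro y ⟨hyB, _⟩ hyball
    have h1 : dist x p0 = ε := by
      rw [hxd, hp0def, dist_eq_norm,
        show w + D • d - (w + s • d) = (D - s) • d by rw [sub_smul]; abel,
        norm_smul, hd, mul_one, Real.norm_eq_abs, abs_of_pos (by linarith), hsdef]
      ring
    have h2 : infDist x B ≤ dist x y := infDist_le_dist_of_mem hyB
    have h3 : dist x y ≤ dist x p0 + dist p0 y := dist_triangle _ _ _
    have h4 : dist p0 y < ρ1 := by rw [dist_comm]; exact mem_ball.mp hyball
    rw [hrdef] at hεr hρ1r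
    linarith
  have hfinB : volume (B ∩ W) ≠ ⊤ := by
    have hsub : B ∩ W ⊆ closedBall w R0 := fun y hy => hR0ball hy.1
    exact (lt_of_le_of_lt (measure_mono hsub) measure_closedBall_lt_top).ne
  have hle : volume (B ∩ W) + volume (ball p0 ρ1) ≤ volume (B ∩ W) := by
    rw [← measure_union hdisj measurableSet_ball]
    calc volume ((B ∩ W) ∪ ball p0 ρ1) ≤ volume (A ∩ W) :=
          measure_mono (union_subset hsubBW hballA)
      _ = volume (B ∩ W) := by
          rw [hWdef, ← inter_assoc, ← inter_assoc]
          exact heq u v hu hv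
  have hzero : volume (ball p0 ρ1) = 0 := by
    have h9 : volume (B ∩ W) + volume (ball p0 ρ1) ≤ volume (B ∩ W) + 0 := by
      rw [add_zero]; exact hle
    exact le_antisymm (ENNReal.le_of_add_le_add_left hfinB h9) zero_le
  exact absurd hzero (measure_ball_pos volume p0 hρ10).ne'

end Stmt14Aux

open Stmt14Aux

/-- If every closed half-plane whose boundary line passes through `w` contains
exactly half the area of the compact convex set `C` of positive area, then `C`
is point symmetric about `w`. -/
theorem stmt_14 (C : Set (EuclideanSpace ℝ (Fin 2))) (hCc : IsCompact C)
    (hCconv : Convex ℝ C) (hCvol : 0 < volume C)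
    (w : EuclideanSpace ℝ (Fin 2)) (hw : w ∈ C)
    (hhalf : ∀ u : EuclideanSpace ℝ (Fin 2), ‖u‖ = 1 →
      volume (C ∩ {q | 0 ≤ ⟪q - w, u⟫}) = volume C / 2) :
    ∀ q, q ∈ C ↔ (2 : ℝ) • w - q ∈ C := by
  classical
  have hCclosed : IsClosed C := hCc.isClosed
  have hCmeas : MeasurableSet C := hCclosed.measurableSet
  have hVne : volume C ≠ ⊤ := hCc.measure_lt_top.ne
  have hhalf' : ∀ u : E, ‖u‖ = 1 → volume (C ∩ H w u) = volume C / 2 := fun u hu => hhalf u hu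
  -- interior of C is nonempty
  have hintne : (interior C).Nonempty := by
    rcases eq_or_ne (affineSpan ℝ C) ⊤ with htop | htop
    · exact hCconv.interior_nonempty_iff_affineSpan_eq_top.mpr htop
    · exfalso
      have h0 : volume ((affineSpan ℝ C : AffineSubspace ℝ E) : Set E) = 0 :=
        MeasureTheory.Measure.addHaar_affineSubspace _ _ htop
      exact hCvol.ne' (measure_mono_null (subset_affineSpan ℝ C) h0)
  -- w is an interior point
  have hwint : w ∈ interior C := by
    by_contra hwi
    obtain ⟨f, hf⟩ := geometric_hahn_banach_open_point hCconv.interior isOpen_interior hwi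
    set v : E := (InnerProductSpace.toDual ℝ E).symm f with hvdef
    have hfv : ∀ y : E, ⟪v, y⟫ = f y := fun y => InnerProductSpace.toDual_symm_apply
    have hv0 : v ≠ 0 := by
      obtain ⟨p, hp⟩ := hintne
      intro h
      have h1 := hf p hp
      rw [← hfv p, ← hfv w, h] at h1
      simp at h1
    obtain ⟨p, hp⟩ := hintne
    have hle : ∀ q ∈ C, f q ≤ f w := by
      intro q hq
      by_contra hgt
      push_neg at hgt
      set δ : ℝ := f q - f w with hδdef
      have hδ0 : 0 < δ := by rw [hδdef]; linarith
      set M : ℝ := |f q - f p| + 1 with hMdef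
      have hM0 : 0 < M := by positivity
      set lam : ℝ := min 1 (δ / M) with hlamdef
      have hlam0 : 0 < lam := lt_min one_pos (by positivity)
      have hlam1 : lam ≤ 1 := min_le_left _ _
      have hlamM : lam * M ≤ δ := by
        have h1 : lam ≤ δ / M := min_le_right _ _
        rw [← le_div_iff₀ hM0]
        exact h1
      have hmem : lam • p + (1 - lam) • q ∈ interior C :=
        hCconv.combo_interior_self_mem_interior hp hq hlam0 (by linarith) (by ring)
      have hval := hf _ hmem
      rw [f.map_add, f.map_smul, f.map_smul, smul_eq_mul, smul_eq_mul] at hval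
      clear_value δ M lam
      have habs : f q - f p ≤ M := by
        rw [hMdef]
        have := le_abs_self (f q - f p)
        linarith
      linarith [mul_le_mul_of_nonneg_left habs hlam0.le]
    set u : E := ‖v‖⁻¹ • v with hudef
    have hvn : ‖v‖ ≠ 0 := norm_ne_zero_iff.mpr hv0
    have hu : ‖u‖ = 1 := by
      rw [hudef, norm_smul, Real.norm_eq_abs, abs_inv, abs_of_nonneg (norm_nonneg v),
        inv_mul_cancel₀ hvn]
    have hu0 : u ≠ 0 := fun h => by simp [h] at hu
    have hzero : C ∩ H w u ⊆ {q : E | ⟪q - w, u⟫ = 0} := by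
      rintro q ⟨hqC, hqH⟩
      refine le_antisymm ?_ hqH
      rw [hudef, real_inner_smul_right]
      have h1 : ⟪q - w, v⟫ = f q - f w := by
        rw [real_inner_comm, inner_sub_right, hfv, hfv]
      rw [h1]
      have h2 : f q - f w ≤ 0 := by linarith [hle q hqC]
      have h3 : (0:ℝ) ≤ ‖v‖⁻¹ := by positivity
      exact mul_nonpos_of_nonneg_of_nonpos h3 h2
    have h0 : volume (C ∩ H w u) = 0 :=
      measure_mono_null hzero (hyper_null w u hu0)
    rw [hhalf' u hu, ENNReal.div_eq_zero_iff] at h0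
    rcases h0 with h | h
    · exact hCvol.ne' h
    · simp at h
  -- the reflection
  set c : E := (2 : ℝ) • w with hcdef
  set φ : E → E := fun q => c - q with hφdef
  have hφφ : ∀ q, φ (φ q) = q := by intro q; simp [hφdef]
  have hφw : φ w = w := by
    show c - w = w
    rw [hcdef, two_smul]
    abel
  set C' : Set E := φ '' C with hC'def
  have hmemC' : ∀ y : E, y ∈ C' ↔ φ y ∈ C := by
    intro y
    constructor
    · rintro ⟨p, hp, rfl⟩; rwa [hφφ]
    · intro h; exact ⟨φ y, h, hφφ y⟩
  have hwC' : w ∈ C' := ⟨w, hw, hφw⟩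
  have hC'conv : Convex ℝ C' := by
    have : C' = {c} - C := by rw [Set.singleton_sub]
    rw [this]
    exact (convex_singleton c).sub hCconv
  have hC'comp : IsCompact C' := hCc.image (continuous_const.sub continuous_id)
  have hC'closed : IsClosed C' := hC'comp.isClosed
  have hC'bdd : Bornology.IsBounded C' := hC'comp.isBounded
  have hwintC' : w ∈ interior C' := by
    set hom : E ≃ₜ E := (Homeomorph.neg E).trans (Homeomorph.addLeft c) with hhomdef
    have hcoe : ⇑hom = φ := by
      funext q
      simp [hhomdef, hφdef, sub_eq_add_neg]
    have h1 : interior C' = hom '' interior C := by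
      rw [hC'def, ← hcoe, (hom.image_interior C).symm]
    rw [h1, ← hcoe] at *
    exact ⟨w, hwint, by rw [hcoe]; exact hφw⟩
  -- wedge symmetry for C
  have hwedge := wedge_symm C hCmeas hVne w hhalf'
  -- half planes transform under φ
  have hHneg : ∀ (u : E) (y : E), y ∈ H w u ↔ φ y ∈ H w (-u) := by
    intro u y
    simp only [H, mem_setOf_eq]
    have h1 : φ y - w = -(y - w) := by
      show c - y - w = -(y - w)
      rw [hcdef, two_smul]
      abel
    rw [h1, inner_neg_neg]
  have hCW : ∀ u v : E, C' ∩ H w u ∩ H w v = φ ⁻¹' (C ∩ H w (-u) ∩ H w (-v)) := by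
    intro u v
    ext y
    simp only [mem_inter_iff, mem_preimage]
    rw [hmemC' y, hHneg u y, hHneg v y]
  have hmp : MeasurePreserving φ (volume : Measure E) volume :=
    Measure.measurePreserving_sub_left volume c
  have heq1 : ∀ u v : E, ‖u‖ = 1 → ‖v‖ = 1 →
      volume (C ∩ H w u ∩ H w v) = volume (C' ∩ H w u ∩ H w v) := by
    intro u v hu hv
    rw [hCW u v, hmp.measure_preimage
      (((hCmeas.inter (measurableSet_H w (-u))).inter (measurableSet_H w (-v))).nullMeasurableSet)]
    exact hwedge u v hu hv
  have h1 : C ⊆ C' := key C C' hCconv hC'conv hC'closed hC'bdd w hwint hwC' heq1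
  have h2 : C' ⊆ C := key C' C hC'conv hCconv hCclosed hCc.isBounded w hwintC' hw
    (fun u v hu hv => (heq1 u v hu hv).symm)
  intro q
  constructor
  · intro hq
    exact h2 ⟨q, hq, rfl⟩
  · intro hq
    have hq' : φ q ∈ C := hq
    have : φ (φ q) ∈ C' := ⟨φ q, hq', rfl⟩
    rw [hφφ q] at this
    exact h2 this
end
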